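/- There exists a function A : 2^{<ω} → ℕ which is upper semicomputable, satisfies A(f(x)) ≤ A(x) + c_f for every total computable function f, satisfies A(x) ≤ |x| + O(1) and |{x : A(x) ≤ n}| = O(2^n), yet |A(x) − C(x)| is unbounded. -/

import Mathlib

open Set Filter

namespace KC

/-- Length of the binary string identified with the natural number `n`. -/
def len (n : ℕ) : ℕ := Nat.log 2 (n + 1)

/-- Complexity of `x` relative to machine `T`. -/
noncomputable def MachineCplx (T : ℕ →. ℕ) (x : ℕ) : ℕ := sInf {n | ∃ y, len y = n ∧ x ∈ T y}

/-- `U` is an optimal machine. -/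
def Optimal (U : ℕ →. ℕ) : Prop :=
  Partrec U ∧ ∀ T : ℕ →. ℕ, Partrec T → ∃ c, ∀ x y, x ∈ T y → MachineCplx U x ≤ len y + c

/-- Conditional complexity of `x` given `y` relative to machine `T`. -/
noncomputable def CondCplx (T : ℕ →. ℕ) (x y : ℕ) : ℕ :=
  sInf {n | ∃ z, len z = n ∧ x ∈ T (Nat.pair z y)}

/-- `U` is optimal as a conditional machine. -/
def CondOptimal (U : ℕ →. ℕ) : Prop :=
  Partrec U ∧ ∀ T : ℕ →. ℕ, Partrec T →
    ∃ c, ∀ x y z, x ∈ T (Nat.pair z y) → CondCplx U x y ≤ len z + c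

/-- `y` is a prefix of `z` (as binary strings identified with naturals). -/
def IsPrefix (y z : ℕ) : Prop := ∃ k, (y + 1) * 2 ^ k ≤ z + 1 ∧ z + 1 < (y + 2) * 2 ^ k

/-- A machine with prefix-free domain. -/
def PrefixFree (T : ℕ →. ℕ) : Prop :=
  ∀ y z, (T y).Dom → (T z).Dom → IsPrefix y z → y = z

/-- `U` is an optimal prefix-free machine. -/
def PrefixOptimal (U : ℕ →. ℕ) : Prop :=
  Partrec U ∧ PrefixFree U ∧ ∀ T : ℕ →. ℕ, Partrec T → PrefixFree T →
    ∃ c, ∀ x y, x ∈ T y → MachineCplx U x ≤ len y + c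

/-- Upper semicomputability: `A` is a pointwise limit of a computable
nonincreasing sequence of approximations. -/
def UpperSemicomputable (A : ℕ → ℕ) : Prop :=
  ∃ F : ℕ → ℕ → ℕ, Computable₂ F ∧ (∀ x, Antitone (F x)) ∧ ∀ x, A x = ⨅ s, F x s

/-- Uniform upper semicomputability for a two-argument function. -/
def UpperSemicomputable₂ (B : ℕ → ℕ → ℕ) : Prop :=
  UpperSemicomputable (fun p => B (Nat.unpair p).1 (Nat.unpair p).2)

/-- Solovay's function `α` built from a complexity function `K`. -/
noncomputable def solovay (K : ℕ → ℕ) (n : ℕ) : ℕ := sInf {m | ∃ i, n < i ∧ K i = m}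

/-- An order: total, non-decreasing, unbounded. -/
def IsOrder (h : ℕ → ℕ) : Prop := Monotone h ∧ ∀ m, ∃ n, m ≤ h n

/-- Sub-linearity: `f n = o(n)`. -/
def Sublinear (f : ℕ → ℕ) : Prop :=
  Tendsto (fun n => (f n : ℝ) / n) atTop (nhds 0)

/-- `p_f = max {n | f n ≥ n}`. -/
noncomputable def pstar (f : ℕ → ℕ) : ℕ := sSup {n | n ≤ f n}

/-- The star-operator: `f* n = min {k | f^[k] n ≤ p_f}`. -/
noncomputable def starOp (f : ℕ → ℕ) (n : ℕ) : ℕ := sInf {k | f^[k] n ≤ pstar f}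

end KC

namespace KCP
open KC


open KC in
/-- binary-length abbreviation -/
theorem len_def (n : ℕ) : len n = Nat.log 2 (n + 1) := rfl

lemma pow_len_le (y : ℕ) : 2 ^ len y ≤ y + 1 :=
  Nat.pow_log_le_self 2 (Nat.succ_ne_zero y)

lemma lt_pow_len (y : ℕ) : y + 1 < 2 ^ (len y + 1) :=
  Nat.lt_pow_succ_log_self one_lt_two (y+1)

lemma len_le_iff {y n : ℕ} : len y ≤ n ↔ y + 1 < 2 ^ (n + 1) := by
  constructor
  · intro h
    exact lt_of_lt_of_le (lt_pow_len y) (Nat.pow_le_pow_right (by norm_num) (by omega))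
  · intro h
    have := (Nat.log_lt_iff_lt_pow one_lt_two (Nat.succ_ne_zero y)).mpr h
    exact Nat.lt_succ_iff.mp this

lemma le_len_iff {y m : ℕ} : m ≤ len y ↔ 2 ^ m ≤ y + 1 :=
  (Nat.le_log_iff_pow_le one_lt_two (Nat.succ_ne_zero y))

lemma len_mono {x y : ℕ} (h : x ≤ y) : len x ≤ len y :=
  Nat.log_mono_right (by omega)

lemma len_pow2 (j : ℕ) : len (2 ^ j - 1) = j := by
  rw [len_def]
  have h : 2 ^ j - 1 + 1 = 2 ^ j := by
    have := Nat.one_le_two_pow (n := j)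
    omega
  rw [h, Nat.log_pow one_lt_two]

/-- self-delimiting encode of `(e, p)`: string of `p` followed by `0 1^e` -/
def enc (e p : ℕ) : ℕ := (p + 1) * 2 ^ (e + 1) + 2 ^ e - 2

lemma enc_add_two (e p : ℕ) : enc e p + 2 = 2 ^ e * (2 * p + 3) := by
  unfold enc
  have h1 : (1:ℕ) ≤ 2 ^ e := Nat.one_le_two_pow
  have h2 : 2 ^ (e+1) = 2 ^ e * 2 := by ring
  have : (p + 1) * 2 ^ (e + 1) + 2 ^ e ≥ 2 := by nlinarith
  have : (p + 1) * 2 ^ (e + 1) + 2 ^ e - 2 + 2 = (p + 1) * 2 ^ (e + 1) + 2 ^ e := by omega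
  rw [this, h2]; ring

lemma len_enc (e p : ℕ) : len (enc e p) = len p + e + 1 := by
  have h1 : (1:ℕ) ≤ 2 ^ e := Nat.one_le_two_pow
  have hadd : enc e p + 1 = (p + 1) * 2 ^ (e + 1) + (2 ^ e - 1) := by
    have h := enc_add_two e p
    have h2 : 2 ^ (e+1) = 2 ^ e * 2 := by ring
    have h3 : (2:ℕ) ^ e * (2 * p + 3) = (p+1) * 2 ^ (e+1) + 2 ^ e := by rw [h2]; ring
    omega
  rw [len_def]
  apply Nat.log_eq_of_pow_le_of_lt_pow
  · rw [hadd]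
    calc 2 ^ (len p + e + 1) = 2 ^ len p * 2 ^ (e+1) := by ring
    _ ≤ (p+1) * 2 ^ (e+1) := Nat.mul_le_mul_right _ (pow_len_le p)
    _ ≤ _ := Nat.le_add_right _ _
  · rw [hadd]
    have : (p+1) * 2 ^ (e+1) + (2^e - 1) < (p + 2) * 2 ^ (e+1) := by
      have h2 : 2 ^ (e+1) = 2 ^ e * 2 := by ring
      have h3 : (p+2) * 2 ^ (e+1) = (p+1) * 2^(e+1) + 2^e + 2^e := by rw [h2]; ring
      omega
    apply lt_of_lt_of_le this
    have hp2 : p + 2 ≤ 2 ^ (len p + 1) := lt_pow_len p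
    calc (p+2) * 2^(e+1) ≤ 2 ^ (len p + 1) * 2 ^ (e+1) := Nat.mul_le_mul_right _ hp2
    _ = 2 ^ (len p + e + 1 + 1) := by ring

def decE (y : ℕ) : ℕ := Nat.findGreatest (fun e => (y + 2) % 2 ^ e = 0) (y + 2)

def decP (y : ℕ) : ℕ := (y + 2) / 2 ^ (decE y + 1) - 1

lemma decE_enc (e p : ℕ) : decE (enc e p) = e := by
  unfold decE
  rw [Nat.findGreatest_eq_iff]
  refine ⟨?_, fun _ => ?_, fun n hn hn' => ?_⟩
  · have h1 : 2 ^ e ≤ enc e p + 2 := by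
      rw [enc_add_two]; nlinarith [Nat.one_le_two_pow (n := e)]
    calc e ≤ 2 ^ e := Nat.le_of_lt (Nat.lt_two_pow_self (n := e))
    _ ≤ _ := h1
  · rw [enc_add_two]; simp [Nat.mul_mod_right]
  · rw [enc_add_two]
    intro hdvd
    have hdvd' : 2 ^ n ∣ 2 ^ e * (2 * p + 3) := Nat.dvd_of_mod_eq_zero hdvd
    have : 2 ^ (e+1) ∣ 2 ^ e * (2 * p + 3) := dvd_trans (pow_dvd_pow 2 hn) hdvd'
    obtain ⟨k, hk⟩ := this
    have h2 : 2 ^ (e+1) = 2 ^ e * 2 := by ring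
    rw [h2] at hk
    have hpos : 0 < 2 ^ e := Nat.pos_of_ne_zero (by positivity)
    have : 2 * p + 3 = 2 * k := by
      have := Nat.eq_of_mul_eq_mul_left hpos (by linarith [hk] : 2 ^ e * (2*p+3) = 2 ^ e * (2 * k))
      omega
    omega

lemma decP_enc (e p : ℕ) : decP (enc e p) = p := by
  unfold decP
  rw [decE_enc, enc_add_two]
  have h2 : 2 ^ (e+1) = 2 ^ e * 2 := by ring
  rw [h2]
  have hpos : 0 < 2 ^ e := Nat.pos_of_ne_zero (by positivity)
  have h3 : 2 ^ e * (2*p+3) = (2 ^ e * 2) * (p+1) + 2 ^ e := by ring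
  rw [h3, Nat.mul_add_div (by positivity), Nat.div_eq_of_lt (by omega)]
  omega

-- chunk 2 additions
open Nat.Partrec (Code)
open Nat.Partrec.Code

private lemma primrec_pow (b : ℕ) : Primrec (fun e : ℕ => b ^ e) := by
  have h : Primrec (Nat.rec (motive := fun _ => ℕ) 1 (fun _ ih => b * ih)) :=
    Primrec.nat_rec₁ 1 ((Primrec.nat_mul.comp (Primrec.const b) Primrec.snd).to₂)
  apply h.of_eq
  intro e
  induction e with
  | zero => rfl
  | succ n ih =>
      show b * (Nat.rec (motive := fun _ => ℕ) 1 (fun _ ih => b * ih) n) = b ^ (n+1)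
      rw [ih]; ring

private lemma primrec_mod_pow : PrimrecRel (fun y e : ℕ => (y + 2) % 2 ^ e = 0) := by
  have h1 : Primrec (fun p : ℕ × ℕ => (p.1 + 2) % 2 ^ p.2) :=
    Primrec.nat_mod.comp (Primrec.nat_add.comp Primrec.fst (Primrec.const 2))
      ((primrec_pow 2).comp Primrec.snd)
  exact PrimrecRel.comp Primrec.eq h1 (Primrec.const 0)

private lemma primrec_decE : Primrec decE :=
  Primrec.nat_findGreatest (Primrec.nat_add.comp Primrec.id (Primrec.const 2)) primrec_mod_pow

private lemma primrec_decP : Primrec decP :=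
  Primrec.nat_sub.comp
    (Primrec.nat_div.comp (Primrec.nat_add.comp Primrec.id (Primrec.const 2))
      ((primrec_pow 2).comp (Primrec.succ.comp primrec_decE)))
    (Primrec.const 1)

lemma len_eq_findGreatest (y : ℕ) : len y = Nat.findGreatest (fun k => 2 ^ k ≤ y + 1) (y + 1) := by
  symm
  rw [Nat.findGreatest_eq_iff]
  refine ⟨Nat.le_of_lt_succ (Nat.lt_succ_of_le (Nat.log_le_self 2 (y+1))), fun _ => pow_len_le y,
    fun n hn _ hP => ?_⟩
  exact absurd (le_len_iff.mpr hP) (by omega)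

private lemma primrec_len : Primrec len := by
  have h : PrimrecRel (fun y k : ℕ => 2 ^ k ≤ y + 1) := by
    have h1 : Primrec (fun p : ℕ × ℕ => 2 ^ p.2) := (primrec_pow 2).comp Primrec.snd
    exact PrimrecRel.comp Primrec.nat_le h1 (Primrec.succ.comp Primrec.fst)
  exact (Primrec.nat_findGreatest Primrec.succ h).of_eq (fun y => (len_eq_findGreatest y).symm)

/-- our universal machine -/
def V : ℕ →. ℕ := fun y => eval (Denumerable.ofNat Code (decE y)) (decP y)

lemma V_partrec : Partrec V := by
  have h : Computable (fun y => (Denumerable.ofNat Code (decE y), decP y)) :=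
    Computable.pair ((Computable.ofNat Code).comp primrec_decE.to_comp) primrec_decP.to_comp
  exact (eval_part.comp ((Computable.ofNat Code).comp primrec_decE.to_comp)
    primrec_decP.to_comp)

lemma V_enc (c : Code) (p : ℕ) : V (enc (Encodable.encode c) p) = eval c p := by
  unfold V
  rw [decE_enc, decP_enc, Denumerable.ofNat_encode]

lemma exists_e {g : ℕ →. ℕ} (hg : Partrec g) : ∃ e : ℕ, ∀ p, V (enc e p) = g p := by
  obtain ⟨c, hc⟩ := exists_code.1 (Partrec.nat_iff.1 hg)
  exact ⟨Encodable.encode c, fun p => by rw [V_enc, hc]⟩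
-- chunk 3: C and T

def idPF : ℕ →. ℕ := fun n => Part.some n

lemma idPF_partrec : Partrec idPF := (Computable.id (α := ℕ)).partrec

noncomputable def eI : ℕ := (exists_e idPF_partrec).choose

lemma V_eI (p : ℕ) : V (enc eI p) = Part.some p := (exists_e idPF_partrec).choose_spec p

def CSet (x : ℕ) : Set ℕ := {n | ∃ y, len y = n ∧ x ∈ V y}

noncomputable def C (x : ℕ) : ℕ := sInf (CSet x)

lemma CSet_nonempty (x : ℕ) : (CSet x).Nonempty :=
  ⟨len x + eI + 1, enc eI x, by rw [len_enc], by rw [V_eI]; exact Part.mem_some x⟩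

lemma C_le {x y : ℕ} (h : x ∈ V y) : C x ≤ len y := Nat.sInf_le ⟨y, rfl, h⟩

lemma C_witness (x : ℕ) : ∃ y, len y = C x ∧ x ∈ V y := Nat.sInf_mem (CSet_nonempty x)

lemma C_le_len (x : ℕ) : C x ≤ len x + (eI + 1) := by
  have := C_le (x := x) (y := enc eI x) (by rw [V_eI]; exact Part.mem_some x)
  rw [len_enc] at this; omega

lemma C_map {g : ℕ →. ℕ} (hg : Partrec g) : ∃ c, ∀ x z, z ∈ g x → C z ≤ C x + c := by
  have hM : Partrec (fun y => (V y).bind g) :=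
    V_partrec.bind ((hg.comp Computable.snd).to₂)
  obtain ⟨e, he⟩ := exists_e hM
  refine ⟨e + 1, fun x z hz => ?_⟩
  obtain ⟨y, hylen, hymem⟩ := C_witness x
  have : z ∈ V (enc e y) := by
    rw [he]
    exact Part.mem_bind_iff.mpr ⟨x, hymem, hz⟩
  calc C z ≤ len (enc e y) := C_le this
  _ = C x + (e + 1) := by rw [len_enc, hylen]; ring

lemma C_stab {f : ℕ → ℕ} (hf : Computable f) : ∃ c, ∀ x, C (f x) ≤ C x + c := by
  obtain ⟨c, hc⟩ := C_map hf.partrec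
  exact ⟨c, fun x => hc x (f x) (by simp [PFun.coe_val, Part.mem_some])⟩

noncomputable def phi (y : ℕ) : ℕ :=
  @dite _ ((V y).Dom) (Classical.dec _) (fun h => (V y).get h) (fun _ => 0)

lemma phi_eq {x y : ℕ} (h : x ∈ V y) : phi y = x := by
  unfold phi
  rw [dif_pos (Part.dom_iff_mem.mpr ⟨x, h⟩)]
  exact Part.get_eq_of_mem h _

lemma C_counting (n : ℕ) : {x | C x ≤ n} ⊆ phi '' Set.Iio (2 ^ (n+1)) := by
  intro x hx
  simp only [Set.mem_setOf_eq] at hx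
  obtain ⟨y, hylen, hymem⟩ := C_witness x
  refine ⟨y, ?_, phi_eq hymem⟩
  have : len y ≤ n := by omega
  have := len_le_iff.mp this
  simpa [Set.mem_Iio] using by omega

-- T : busy beaver by output
def TS (j : ℕ) : Set ℕ := {v | ∃ y, len y ≤ j ∧ v ∈ V y}

lemma TS_subset (j : ℕ) : TS j ⊆ phi '' Set.Iio (2 ^ (j+1)) := by
  rintro v ⟨y, hylen, hymem⟩
  exact ⟨y, by simpa [Set.mem_Iio] using by have := len_le_iff.mp hylen; omega, phi_eq hymem⟩

lemma TS_finite (j : ℕ) : (TS j).Finite :=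
  ((Set.finite_Iio _).image phi).subset (TS_subset j)

lemma TS_mono {i j : ℕ} (h : i ≤ j) : TS i ⊆ TS j :=
  fun v ⟨y, hy, hv⟩ => ⟨y, hy.trans h, hv⟩

lemma TS_zero_mem (j : ℕ) : 0 ∈ TS (j + (eI + 1)) := by
  refine ⟨enc eI 0, ?_, by rw [V_eI]; exact Part.mem_some 0⟩
  rw [len_enc]
  have : len 0 = 0 := by rw [len_def]; simp
  omega

noncomputable def T (j : ℕ) : ℕ := sSup (TS (j + (eI + 1)))

lemma le_T {v y j : ℕ} (hy : len y ≤ j) (hv : v ∈ V y) : v ≤ T j :=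
  le_csSup (TS_finite _).bddAbove ⟨y, by omega, hv⟩

lemma T_mem (j : ℕ) : ∃ y, len y ≤ j + (eI + 1) ∧ T j ∈ V y :=
  Nat.sSup_mem ⟨0, TS_zero_mem j⟩ (TS_finite _).bddAbove

lemma T_mono : Monotone T := fun i j h =>
  csSup_le_csSup (TS_finite _).bddAbove ⟨0, TS_zero_mem i⟩ (TS_mono (by omega))

lemma T_dominates {g : ℕ → ℕ} (hg : Computable g) : ∃ c, ∀ j, g (T j) ≤ T (j + c) := by
  have hM : Partrec (fun y => (V y).map g) :=
    V_partrec.map ((hg.comp Computable.snd).to₂)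
  obtain ⟨e, he⟩ := exists_e hM
  refine ⟨eI + e + 2, fun j => ?_⟩
  obtain ⟨y, hylen, hymem⟩ := T_mem j
  have hmem : g (T j) ∈ V (enc e y) := by
    rw [he]
    exact Part.mem_map g hymem
  have hlen : len (enc e y) ≤ j + (eI + e + 2) := by rw [len_enc]; omega
  exact le_T hlen hmem

lemma two_mul_le_pow {j : ℕ} (h : 2 ≤ j) : 2 * j ≤ 2 ^ j := by
  induction j with
  | zero => omega
  | succ n ih =>
      rcases Nat.lt_or_ge n 2 with hn | hn
      · interval_cases n <;> norm_num
      · have h1 : 2 * n ≤ 2 ^ n := ih (by omega)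
        have h2 : (2:ℕ) ≤ 2 ^ n := by
          calc (2:ℕ) ≤ 2 * n := by omega
          _ ≤ 2 ^ n := h1
        rw [pow_succ]
        omega

lemma pow4_le_pow4 {a b : ℕ} (h : a ≤ b) : (4:ℕ) ^ a ≤ 4 ^ b :=
  Nat.pow_le_pow_right (by norm_num) h

lemma T_lower : ∃ m₀, ∀ m, m₀ ≤ m → 4 ^ (m + 1) ≤ T m := by
  have hc : Computable (fun y : ℕ => (4:ℕ) ^ (y + 2)) :=
    ((primrec_pow 4).comp (Primrec.nat_add.comp Primrec.id (Primrec.const 2))).to_comp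
  obtain ⟨e, he⟩ := exists_e hc.partrec
  refine ⟨2 * (e + 1) + 8, fun m hm => ?_⟩
  set j := m - (e + 1) with hj
  have hmj : m = j + (e + 1) := by omega
  have hyl : len (2 ^ j - 1) = j := len_pow2 j
  have hmem : (4:ℕ) ^ (2 ^ j - 1 + 2) ∈ V (enc e (2 ^ j - 1)) := by
    rw [he]
    simp [PFun.coe_val, Part.mem_some]
  have hlen : len (enc e (2 ^ j - 1)) ≤ j + e + 1 := by rw [len_enc, hyl]
  have hT : (4:ℕ) ^ (2 ^ j - 1 + 2) ≤ T (j + e + 1) := le_T hlen hmem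
  have hTm : T (j + e + 1) = T m := by rw [hmj]; ring_nf
  have hexp : m + 1 ≤ 2 ^ j - 1 + 2 := by
    have h2j : 2 * j ≤ 2 ^ j := two_mul_le_pow (by omega)
    omega
  calc (4:ℕ) ^ (m+1) ≤ 4 ^ (2 ^ j - 1 + 2) := pow4_le_pow4 hexp
  _ ≤ T (j + e + 1) := hT
  _ = T m := hTm
-- chunk 4: hT, A, main estimates

lemma T_unbounded (x : ℕ) : ∃ j, x ≤ T j := by
  obtain ⟨m₀, hm⟩ := T_lower
  refine ⟨max m₀ x, ?_⟩
  have h := hm _ (le_max_left m₀ x)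
  have h2 : x < 2 ^ (max m₀ x + 1) := by
    calc x ≤ max m₀ x := le_max_right _ _
    _ < 2 ^ (max m₀ x) := Nat.lt_two_pow_self
    _ ≤ 2 ^ (max m₀ x + 1) := Nat.pow_le_pow_right (by norm_num) (by omega)
  have h3 : (2:ℕ) ^ (max m₀ x + 1) ≤ 4 ^ (max m₀ x + 1) :=
    Nat.pow_le_pow_left (by norm_num) _
  omega

noncomputable def hT (x : ℕ) : ℕ := sInf {j | x ≤ T j}

lemma hT_spec (x : ℕ) : x ≤ T (hT x) := Nat.sInf_mem (T_unbounded x)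

lemma hT_le {x j : ℕ} (h : x ≤ T j) : hT x ≤ j := Nat.sInf_le h

lemma hT_min {x j : ℕ} (h : j < hT x) : ¬ (x ≤ T j) :=
  fun hm => absurd h (Nat.sInf_le (Set.mem_setOf_eq ▸ hm) : hT x ≤ j).not_gt

lemma hT_mono {x y : ℕ} (h : x ≤ y) : hT x ≤ hT y := hT_le (h.trans (hT_spec y))

lemma hT_le_len : ∃ K, ∀ x, 2 * hT x ≤ len x + K := by
  obtain ⟨m₀, hm⟩ := T_lower
  refine ⟨2 * m₀ + 4, fun x => ?_⟩
  set j := hT x with hj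
  rcases le_or_gt j (m₀ + 1) with hc | hc
  · omega
  · have hmin : ¬ (x ≤ T (j - 1)) := hT_min (by omega)
    have hTl : 4 ^ (j - 1 + 1) ≤ T (j - 1) := hm _ (by omega)
    have heq : j - 1 + 1 = j := by omega
    rw [heq] at hTl
    have hxl : 4 ^ j ≤ x := by omega
    have hpow : (4:ℕ) ^ j = 2 ^ (2 * j) := by
      rw [show (4:ℕ) = 2 ^ 2 by norm_num, ← pow_mul]
    have : 2 * j ≤ len x := le_len_iff.mpr (by omega)
    omega

lemma hT_stab {f : ℕ → ℕ} (hf : Computable f) : ∃ c, ∀ x, hT (f x) ≤ hT x + c := by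
  set G : ℕ → ℕ := fun n => Nat.rec (f 0) (fun k ih => max ih (f (k + 1))) n with hG
  have hGc : Computable G := by
    have hh : Computable₂ (fun (_ : ℕ) (p : ℕ × ℕ) => max p.2 (f (p.1 + 1))) :=
      ((Primrec.nat_max.to_comp).comp (Computable.snd.comp Computable.snd)
        (hf.comp (Computable.succ.comp (Computable.fst.comp Computable.snd)))).to₂
    exact Computable.nat_rec Computable.id (Computable.const (f 0)) hh
  have hGmono : Monotone G := by
    apply monotone_nat_of_le_succ
    intro n
    exact le_max_left _ _
  have hfG : ∀ n, f n ≤ G n := by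
    intro n
    cases n with
    | zero => exact le_refl _
    | succ k => exact le_max_right _ _
  obtain ⟨c, hc⟩ := T_dominates hGc
  refine ⟨c, fun x => ?_⟩
  have h1 : f x ≤ T (hT x + c) := by
    calc f x ≤ G x := hfG x
    _ ≤ G (T (hT x)) := hGmono (hT_spec x)
    _ ≤ T (hT x + c) := hc _
  exact hT_le h1

lemma hT_gap (j : ℕ) : j + 1 ≤ hT (T j + 1) := by
  by_contra h
  push_neg at h
  have h1 : hT (T j + 1) ≤ j := by omega
  have := (hT_spec (T j + 1)).trans (T_mono h1)
  omega

lemma C_T (j : ℕ) : C (T j) ≤ j + (eI + 1) := by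
  obtain ⟨y, hylen, hymem⟩ := T_mem j
  exact (C_le hymem).trans (by omega)

-- the counterexample function
noncomputable def A (x : ℕ) : ℕ := max (C x) (2 * hT x)

lemma A_stab {f : ℕ → ℕ} (hf : Computable f) : ∃ c, ∀ x, A (f x) ≤ A x + c := by
  obtain ⟨c1, hc1⟩ := C_stab hf
  obtain ⟨c2, hc2⟩ := hT_stab hf
  refine ⟨max c1 (2 * c2), fun x => ?_⟩
  apply max_le
  · exact (hc1 x).trans (Nat.add_le_add (le_max_left _ _) (le_max_left _ _))
  · have h2 : 2 * hT (f x) ≤ 2 * hT x + 2 * c2 := by have := hc2 x; omega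
    exact h2.trans (Nat.add_le_add (le_max_right _ _) (le_max_right _ _))

lemma A_le_len : ∃ c, ∀ x, A x ≤ len x + c := by
  obtain ⟨K, hK⟩ := hT_le_len
  refine ⟨max (eI + 1) K, fun x => ?_⟩
  apply max_le
  · exact (C_le_len x).trans (Nat.add_le_add_left (le_max_left _ _) _)
  · exact (hK x).trans (Nat.add_le_add_left (le_max_right _ _) _)

lemma A_counting (n : ℕ) : {x | A x ≤ n}.Finite ∧ {x | A x ≤ n}.ncard ≤ 2 * 2 ^ n := by
  have hsub : {x | A x ≤ n} ⊆ phi '' Set.Iio (2 ^ (n+1)) := by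
    intro x hx
    simp only [Set.mem_setOf_eq] at hx
    apply C_counting n
    have : C x ≤ A x := le_max_left _ _
    simp only [Set.mem_setOf_eq]
    omega
  have hfin : (phi '' Set.Iio (2 ^ (n+1))).Finite := (Set.finite_Iio _).image phi
  refine ⟨hfin.subset hsub, ?_⟩
  calc {x | A x ≤ n}.ncard ≤ (phi '' Set.Iio (2 ^ (n+1))).ncard :=
        Set.ncard_le_ncard hsub hfin
  _ ≤ (Set.Iio (2 ^ (n+1))).ncard := Set.ncard_image_le (Set.finite_Iio _)
  _ = 2 ^ (n+1) := by
        rw [← Finset.coe_range, Set.ncard_coe_finset, Finset.card_range]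
  _ = 2 * 2 ^ n := by ring

lemma A_gap : ∀ b : ℕ, ∃ x, C x + b < A x := by
  intro b
  obtain ⟨cs, hcs⟩ := C_stab Computable.succ
  set j := b + cs + eI + 2 with hj
  refine ⟨T j + 1, ?_⟩
  have h1 : C (T j + 1) ≤ j + (eI + 1) + cs := by
    have ha := hcs (T j)
    have hb := C_T j
    simp only [Nat.succ_eq_add_one] at ha
    omega
  have h2 : 2 * (j + 1) ≤ A (T j + 1) := by
    have hg := hT_gap j
    calc 2 * (j + 1) ≤ 2 * hT (T j + 1) := by omega
    _ ≤ A (T j + 1) := le_max_right _ _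
  omega
-- chunk 5: upper semicomputability

lemma foldr_min_le_init (d : ℕ) (l : List ℕ) : l.foldr min d ≤ d := by
  induction l with
  | nil => exact le_refl d
  | cons b l ih => exact (min_le_right _ _).trans ih

lemma foldr_min_le_mem {a d : ℕ} {l : List ℕ} (h : a ∈ l) : l.foldr min d ≤ a := by
  induction l with
  | nil => simp at h
  | cons b l ih =>
      rcases List.mem_cons.mp h with rfl | h'
      · exact min_le_left _ _
      · exact (min_le_right _ _).trans (ih h')

lemma foldr_min_cases (d : ℕ) (l : List ℕ) : l.foldr min d = d ∨ l.foldr min d ∈ l := by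
  induction l with
  | nil => exact Or.inl rfl
  | cons b l ih =>
      rw [List.foldr_cons]
      rcases min_cases b (l.foldr min d) with ⟨h, _⟩ | ⟨h, _⟩
      · rw [h]; exact Or.inr (List.mem_cons_self)
      · rw [h]
        rcases ih with h' | h'
        · exact Or.inl h'
        · exact Or.inr (List.mem_cons_of_mem _ h')

lemma le_foldr_max_init (d : ℕ) (l : List ℕ) : d ≤ l.foldr max d := by
  induction l with
  | nil => exact le_refl d
  | cons b l ih => exact ih.trans (le_max_right _ _)

lemma le_foldr_max_mem {a d : ℕ} {l : List ℕ} (h : a ∈ l) : a ≤ l.foldr max d := by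
  induction l with
  | nil => simp at h
  | cons b l ih =>
      rcases List.mem_cons.mp h with rfl | h'
      · exact le_max_left _ _
      · exact (ih h').trans (le_max_right _ _)

lemma foldr_max_le {b d : ℕ} {l : List ℕ} (h : ∀ a ∈ l, a ≤ b) (hd : d ≤ b) :
    l.foldr max d ≤ b := by
  induction l with
  | nil => exact hd
  | cons c l ih =>
      exact max_le (h c (List.mem_cons_self)) (ih fun a ha => h a (List.mem_cons_of_mem _ ha))

noncomputable def cV : Code := (exists_code.1 (Partrec.nat_iff.1 V_partrec)).choose

lemma cV_spec : eval cV = V := (exists_code.1 (Partrec.nat_iff.1 V_partrec)).choose_spec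

lemma evaln_V {s y x : ℕ} (h : evaln s cV y = some x) : x ∈ V y := by
  rw [← cV_spec]
  exact evaln_sound (by rw [Option.mem_def]; exact h)

/-- stage-s approximation of C -/
noncomputable def gC (x s y : ℕ) : ℕ :=
  if evaln s cV y = some x then len y else len x + (eI + 1)

noncomputable def FC (x s : ℕ) : ℕ :=
  ((List.range (s+1)).map (gC x s)).foldr min (len x + (eI + 1))

lemma C_le_gC (x s y : ℕ) : C x ≤ gC x s y := by
  unfold gC
  split_ifs with hc
  · exact C_le (evaln_V hc)
  · exact C_le_len x

lemma FC_ge (x s : ℕ) : C x ≤ FC x s := by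
  rcases foldr_min_cases (len x + (eI + 1)) ((List.range (s+1)).map (gC x s)) with h | h
  · rw [FC, h]; exact C_le_len x
  · obtain ⟨y, _, hval⟩ := List.mem_map.mp h
    rw [FC, ← hval]
    exact C_le_gC x s y

lemma FC_hit (x : ℕ) : ∃ s, FC x s ≤ C x := by
  obtain ⟨y, hylen, hymem⟩ := C_witness x
  have hx : x ∈ eval cV y := by rw [cV_spec]; exact hymem
  obtain ⟨k, hk⟩ := evaln_complete.mp hx
  refine ⟨max k y, ?_⟩
  have hk' : evaln (max k y) cV y = some x :=
    Option.mem_def.mp (evaln_mono (le_max_left _ _) hk)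
  have hmem : gC x (max k y) y ∈ (List.range (max k y + 1)).map (gC x (max k y)) :=
    List.mem_map_of_mem (List.mem_range.mpr (by omega))
  have h1 := foldr_min_le_mem (d := len x + (eI + 1)) hmem
  have h2 : gC x (max k y) y = len y := by rw [gC, if_pos hk']
  rw [← hylen]
  rw [h2] at h1
  exact h1

lemma FC_antitone (x : ℕ) : Antitone (FC x) := by
  intro s t hst
  show FC x t ≤ FC x s
  unfold FC
  rcases foldr_min_cases (len x + (eI + 1)) ((List.range (s+1)).map (gC x s)) with h | h
  · rw [h]
    exact foldr_min_le_init _ _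
  · obtain ⟨y, hy, hval⟩ := List.mem_map.mp h
    rw [← hval]
    by_cases hc : evaln s cV y = some x
    · have hct : evaln t cV y = some x :=
        Option.mem_def.mp (evaln_mono hst (Option.mem_def.mpr hc))
      have hmem : gC x t y ∈ (List.range (t+1)).map (gC x t) :=
        List.mem_map_of_mem (List.mem_range.mpr (by
          have := List.mem_range.mp hy; omega))
      have h1 := foldr_min_le_mem (d := len x + (eI + 1)) hmem
      have h2 : gC x t y = len y := by rw [gC, if_pos hct]
      have h3 : gC x s y = len y := by rw [gC, if_pos hc]
      rw [h3]
      rw [h2] at h1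
      exact h1
    · have h3 : gC x s y = len x + (eI + 1) := by rw [gC, if_neg hc]
      rw [h3]
      exact foldr_min_le_init _ _
-- chunk 6: approximation of hT

noncomputable def KD : ℕ := hT_le_len.choose

lemma KD_spec : ∀ x, 2 * hT x ≤ len x + KD := hT_le_len.choose_spec

lemma le_T' {v y j : ℕ} (hy : len y ≤ j + (eI + 1)) (hv : v ∈ V y) : v ≤ T j :=
  le_csSup (TS_finite _).bddAbove ⟨y, hy, hv⟩

noncomputable def gT (s j y : ℕ) : ℕ :=
  if len y ≤ j + (eI + 1) then (evaln s cV y).getD 0 else 0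

noncomputable def Ts (s j : ℕ) : ℕ := ((List.range (s+1)).map (gT s j)).foldr max 0

lemma gT_le_T (s j y : ℕ) : gT s j y ≤ T j := by
  unfold gT
  split_ifs with hlen
  · cases h : evaln s cV y with
    | none => simp
    | some v =>
        simp only [Option.getD_some]
        exact le_T' hlen (evaln_V h)
  · exact Nat.zero_le _

lemma Ts_le_T (s j : ℕ) : Ts s j ≤ T j := by
  apply foldr_max_le _ (Nat.zero_le _)
  intro a ha
  obtain ⟨y, _, hval⟩ := List.mem_map.mp ha
  rw [← hval]
  exact gT_le_T s j y

lemma Ts_mono_s {s t : ℕ} (hst : s ≤ t) (j : ℕ) : Ts s j ≤ Ts t j := by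
  apply foldr_max_le _ (Nat.zero_le _)
  intro a ha
  obtain ⟨y, hy, hval⟩ := List.mem_map.mp ha
  rw [← hval]
  unfold gT
  split_ifs with hlen
  · cases h : evaln s cV y with
    | none => simp
    | some v =>
        simp only [Option.getD_some]
        have ht : evaln t cV y = some v :=
          Option.mem_def.mp (evaln_mono hst (Option.mem_def.mpr h))
        have hmem : gT t j y ∈ (List.range (t+1)).map (gT t j) :=
          List.mem_map_of_mem (List.mem_range.mpr (by
            have := List.mem_range.mp hy; omega))
        have h2 : gT t j y = v := by rw [gT, if_pos hlen, ht, Option.getD_some]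
        have := le_foldr_max_mem (d := 0) hmem
        rw [h2] at this
        exact this
  · exact Nat.zero_le _

lemma Ts_hit (j : ℕ) : ∃ s, T j ≤ Ts s j := by
  obtain ⟨y, hylen, hymem⟩ := T_mem j
  have hx : T j ∈ eval cV y := by rw [cV_spec]; exact hymem
  obtain ⟨k, hk⟩ := evaln_complete.mp hx
  refine ⟨max k y, ?_⟩
  have hk' : evaln (max k y) cV y = some (T j) :=
    Option.mem_def.mp (evaln_mono (le_max_left _ _) hk)
  have h2 : gT (max k y) j y = T j := by rw [gT, if_pos hylen, hk', Option.getD_some]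
  have hmem : gT (max k y) j y ∈ (List.range (max k y + 1)).map (gT (max k y) j) :=
    List.mem_map_of_mem (List.mem_range.mpr (by omega))
  have := le_foldr_max_mem (d := 0) hmem
  rw [h2] at this
  exact this

noncomputable def gH (x s j : ℕ) : ℕ := if x ≤ Ts s j then 2 * j else len x + KD

noncomputable def Fh (x s : ℕ) : ℕ :=
  ((List.range (len x + KD + 1)).map (gH x s)).foldr min (len x + KD)

lemma hT_le_gH (x s j : ℕ) : 2 * hT x ≤ gH x s j := by
  unfold gH
  split_ifs with hc
  · have : x ≤ T j := hc.trans (Ts_le_T s j)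
    have := hT_le this
    omega
  · exact KD_spec x

lemma Fh_ge (x s : ℕ) : 2 * hT x ≤ Fh x s := by
  rcases foldr_min_cases (len x + KD) ((List.range (len x + KD + 1)).map (gH x s)) with h | h
  · rw [Fh, h]; exact KD_spec x
  · obtain ⟨j, _, hval⟩ := List.mem_map.mp h
    rw [Fh, ← hval]
    exact hT_le_gH x s j

lemma Fh_hit (x : ℕ) : ∃ s, Fh x s ≤ 2 * hT x := by
  obtain ⟨s, hs⟩ := Ts_hit (hT x)
  refine ⟨s, ?_⟩
  have hc : x ≤ Ts s (hT x) := (hT_spec x).trans hs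
  have h2 : gH x s (hT x) = 2 * hT x := by rw [gH, if_pos hc]
  have hrange : hT x ∈ List.range (len x + KD + 1) :=
    List.mem_range.mpr (by have := KD_spec x; omega)
  have hmem : gH x s (hT x) ∈ (List.range (len x + KD + 1)).map (gH x s) :=
    List.mem_map_of_mem hrange
  have := foldr_min_le_mem (d := len x + KD) hmem
  rw [h2] at this
  exact this

lemma Fh_antitone (x : ℕ) : Antitone (Fh x) := by
  intro s t hst
  show Fh x t ≤ Fh x s
  unfold Fh
  rcases foldr_min_cases (len x + KD) ((List.range (len x + KD + 1)).map (gH x s)) with h | h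
  · rw [h]
    exact foldr_min_le_init _ _
  · obtain ⟨j, hj, hval⟩ := List.mem_map.mp h
    rw [← hval]
    by_cases hc : x ≤ Ts s j
    · have hct : x ≤ Ts t j := hc.trans (Ts_mono_s hst j)
      have h2 : gH x t j = 2 * j := by rw [gH, if_pos hct]
      have h3 : gH x s j = 2 * j := by rw [gH, if_pos hc]
      have hmem : gH x t j ∈ (List.range (len x + KD + 1)).map (gH x t) :=
        List.mem_map_of_mem hj
      have := foldr_min_le_mem (d := len x + KD) hmem
      rw [h2] at this
      rw [h3]
      exact this
    · have h3 : gH x s j = len x + KD := by rw [gH, if_neg hc]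
      rw [h3]
      exact foldr_min_le_init _ _

-- the combined approximation
noncomputable def FA (x s : ℕ) : ℕ := max (FC x s) (Fh x s)

lemma FA_antitone (x : ℕ) : Antitone (FA x) :=
  fun _ _ h => max_le_max (FC_antitone x h) (Fh_antitone x h)

lemma A_eq_iInf (x : ℕ) : A x = ⨅ s, FA x s := by
  apply le_antisymm
  · apply le_ciInf
    intro s
    exact max_le_max (FC_ge x s) (Fh_ge x s)
  · obtain ⟨s1, hs1⟩ := FC_hit x
    obtain ⟨s2, hs2⟩ := Fh_hit x
    have h1 : FA x (max s1 s2) ≤ A x := by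
      apply max_le
      · exact ((FC_antitone x (le_max_left s1 s2)).trans hs1).trans (le_max_left _ _)
      · exact ((Fh_antitone x (le_max_right s1 s2)).trans hs2).trans (le_max_right _ _)
    exact (ciInf_le (OrderBot.bddBelow _) (max s1 s2)).trans h1
-- chunk 7: computability of the approximations

private lemma primrec_len' : Primrec len := primrec_len

lemma FC_primrec : Primrec₂ FC := by
  have harg : Primrec (fun q : (ℕ × ℕ) × ℕ => ((q.1.2, cV), q.2)) :=
    (((Primrec.snd.comp Primrec.fst).pair (Primrec.const cV)).pair Primrec.snd)
  have heval : Primrec (fun q : (ℕ × ℕ) × ℕ => evaln q.1.2 cV q.2) :=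
    primrec_evaln.comp harg
  have hcond : PrimrecPred (fun q : (ℕ × ℕ) × ℕ => evaln q.1.2 cV q.2 = some q.1.1) :=
    PrimrecRel.comp Primrec.eq heval (Primrec.option_some.comp (Primrec.fst.comp Primrec.fst))
  have hg : Primrec₂ (fun (p : ℕ × ℕ) (y : ℕ) => gC p.1 p.2 y) := by
    refine Primrec.ite hcond (primrec_len'.comp Primrec.snd) ?_
    exact Primrec.nat_add.comp (primrec_len'.comp (Primrec.fst.comp Primrec.fst))
      (Primrec.const (eI + 1))
  have hlist : Primrec (fun p : ℕ × ℕ => (List.range (p.2 + 1)).map (gC p.1 p.2)) :=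
    Primrec.list_map (Primrec.list_range.comp (Primrec.succ.comp Primrec.snd)) hg
  have hd : Primrec (fun p : ℕ × ℕ => len p.1 + (eI + 1)) :=
    Primrec.nat_add.comp (primrec_len'.comp Primrec.fst) (Primrec.const (eI + 1))
  have hh : Primrec₂ (fun (_ : ℕ × ℕ) (q : ℕ × ℕ) => min q.1 q.2) :=
    (Primrec.nat_min.comp (Primrec.fst.comp Primrec.snd) (Primrec.snd.comp Primrec.snd)).to₂
  exact (Primrec.list_foldr hlist hd hh).of_eq (fun p => rfl)

lemma Ts_primrec : Primrec₂ Ts := by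
  have harg : Primrec (fun q : (ℕ × ℕ) × ℕ => ((q.1.1, cV), q.2)) :=
    (((Primrec.fst.comp Primrec.fst).pair (Primrec.const cV)).pair Primrec.snd)
  have heval : Primrec (fun q : (ℕ × ℕ) × ℕ => evaln q.1.1 cV q.2) :=
    primrec_evaln.comp harg
  have hcond : PrimrecPred (fun q : (ℕ × ℕ) × ℕ => len q.2 ≤ q.1.2 + (eI + 1)) :=
    PrimrecRel.comp Primrec.nat_le (primrec_len'.comp Primrec.snd)
      (Primrec.nat_add.comp (Primrec.snd.comp Primrec.fst) (Primrec.const (eI + 1)))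
  have hg : Primrec₂ (fun (p : ℕ × ℕ) (y : ℕ) => gT p.1 p.2 y) := by
    refine Primrec.ite hcond ?_ (Primrec.const 0)
    exact Primrec.option_getD.comp heval (Primrec.const 0)
  have hlist : Primrec (fun p : ℕ × ℕ => (List.range (p.1 + 1)).map (gT p.1 p.2)) :=
    Primrec.list_map (Primrec.list_range.comp (Primrec.succ.comp Primrec.fst)) hg
  have hh : Primrec₂ (fun (_ : ℕ × ℕ) (q : ℕ × ℕ) => max q.1 q.2) :=
    (Primrec.nat_max.comp (Primrec.fst.comp Primrec.snd) (Primrec.snd.comp Primrec.snd)).to₂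
  exact (Primrec.list_foldr hlist (Primrec.const 0) hh).of_eq (fun p => rfl)

lemma Fh_primrec : Primrec₂ Fh := by
  have hTs : Primrec (fun q : (ℕ × ℕ) × ℕ => Ts q.1.2 q.2) :=
    Ts_primrec.comp (Primrec.snd.comp Primrec.fst) Primrec.snd
  have hcond : PrimrecPred (fun q : (ℕ × ℕ) × ℕ => q.1.1 ≤ Ts q.1.2 q.2) :=
    PrimrecRel.comp Primrec.nat_le (Primrec.fst.comp Primrec.fst) hTs
  have hg : Primrec₂ (fun (p : ℕ × ℕ) (j : ℕ) => gH p.1 p.2 j) := by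
    refine Primrec.ite hcond (Primrec.nat_mul.comp (Primrec.const 2) Primrec.snd) ?_
    exact Primrec.nat_add.comp (primrec_len'.comp (Primrec.fst.comp Primrec.fst))
      (Primrec.const KD)
  have hlist : Primrec (fun p : ℕ × ℕ => (List.range (len p.1 + KD + 1)).map (gH p.1 p.2)) :=
    Primrec.list_map
      (Primrec.list_range.comp (Primrec.succ.comp
        (Primrec.nat_add.comp (primrec_len'.comp Primrec.fst) (Primrec.const KD)))) hg
  have hd : Primrec (fun p : ℕ × ℕ => len p.1 + KD) :=
    Primrec.nat_add.comp (primrec_len'.comp Primrec.fst) (Primrec.const KD)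
  have hh : Primrec₂ (fun (_ : ℕ × ℕ) (q : ℕ × ℕ) => min q.1 q.2) :=
    (Primrec.nat_min.comp (Primrec.fst.comp Primrec.snd) (Primrec.snd.comp Primrec.snd)).to₂
  exact (Primrec.list_foldr hlist hd hh).of_eq (fun p => rfl)

lemma FA_computable : Computable₂ FA := by
  have : Primrec₂ FA :=
    (Primrec.nat_max.comp (FC_primrec.comp Primrec.fst Primrec.snd)
      (Fh_primrec.comp Primrec.fst Primrec.snd)).to₂
  exact this.to_comp

lemma A_usc : ∃ F : ℕ → ℕ → ℕ, Computable₂ F ∧ (∀ x, Antitone (F x)) ∧ ∀ x, A x = ⨅ s, F x s :=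
  ⟨FA, FA_computable, FA_antitone, A_eq_iInf⟩

end KCP

open KC
/-- Shen's stability axiom cannot be weakened to total computable functions. -/
theorem total_stability_insufficient (U : ℕ →. ℕ) (hU : Optimal U) :
    ∃ A : ℕ → ℕ,
      UpperSemicomputable A ∧
      (∀ f : ℕ → ℕ, Computable f → ∃ c, ∀ x, A (f x) ≤ A x + c) ∧
      (∃ c, ∀ x, A x ≤ len x + c) ∧
      (∃ c, ∀ n, {x | A x ≤ n}.Finite ∧ {x | A x ≤ n}.ncard ≤ c * 2 ^ n) ∧
      ¬ (∃ c, ∀ x, A x ≤ MachineCplx U x + c ∧ MachineCplx U x ≤ A x + c) := by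
  refine ⟨KCP.A, KCP.A_usc, fun f hf => KCP.A_stab hf, KCP.A_le_len, ⟨2, KCP.A_counting⟩, ?_⟩
  rintro ⟨c, hc⟩
  obtain ⟨cUV, hcUV⟩ := hU.2 KCP.V KCP.V_partrec
  obtain ⟨x, hx⟩ := KCP.A_gap (c + cUV)
  obtain ⟨y, hylen, hymem⟩ := KCP.C_witness x
  have h1 : MachineCplx U x ≤ KCP.C x + cUV := by
    have h := hcUV x y hymem
    rw [hylen] at h
    exact h
  have h2 := (hc x).1
  omega
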